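/- Let 𝒩 be a map on a Banach space such that for some constants a ≥ 0 and a ball B = {F : ‖F‖ ≤ b‖F₀‖} with b > 1: ‖𝒩F‖ ≤ a·‖F‖/(1 − c‖F‖) + ‖F₀‖ whenever c‖F‖ < 1, and ‖𝒩(F+h) − 𝒩F‖ ≤ a·‖h‖/(1 − c(‖F‖+‖h‖))² whenever c(‖F‖+‖h‖) < 1. If c·b‖F₀‖ < 1, a/(1 − c·b‖F₀‖) < 1 − 1/b, and a/(1 − c·b‖F₀‖)² < 1, then 𝒩 maps B into B, is a contraction on B, and hence has a unique fixed point in B. -/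

import Mathlib

theorem stmt_15 {X : Type*} [NormedAddCommGroup X] [NormedSpace ℝ X] [CompleteSpace X]
    (𝒩 : X → X) (F₀ : X) (a c b : ℝ)
    (ha : 0 ≤ a) (hc : 0 ≤ c) (hb : 1 < b) (hF₀ : 0 < ‖F₀‖)
    (hmap : ∀ F : X, c * ‖F‖ < 1 → ‖𝒩 F‖ ≤ a * ‖F‖ / (1 - c * ‖F‖) + ‖F₀‖)
    (hlip : ∀ F h : X, c * (‖F‖ + ‖h‖) < 1 →
      ‖𝒩 (F + h) - 𝒩 F‖ ≤ a * ‖h‖ / (1 - c * (‖F‖ + ‖h‖)) ^ 2)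
    (h1 : c * b * ‖F₀‖ < 1)
    (h2 : a / (1 - c * b * ‖F₀‖) < 1 - 1 / b)
    (h3 : a / (1 - c * b * ‖F₀‖) ^ 2 < 1) :
    (∀ F : X, ‖F‖ ≤ b * ‖F₀‖ → ‖𝒩 F‖ ≤ b * ‖F₀‖) ∧
    (∃ L : ℝ, 0 ≤ L ∧ L < 1 ∧
      ∀ F G : X, ‖F‖ ≤ b * ‖F₀‖ → ‖G‖ ≤ b * ‖F₀‖ → ‖𝒩 F - 𝒩 G‖ ≤ L * ‖F - G‖) ∧
    (∃! F : X, ‖F‖ ≤ b * ‖F₀‖ ∧ 𝒩 F = F) := by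
  have hb0 : (0:ℝ) < b := lt_trans one_pos hb
  set R : ℝ := b * ‖F₀‖ with hRdef
  have hR0 : 0 < R := mul_pos hb0 hF₀
  have hcR : c * R < 1 := by rw [hRdef, ← mul_assoc]; exact h1
  have hδ : 0 < 1 - c * R := by linarith
  -- Part 1: mapping property
  have hmapB : ∀ F : X, ‖F‖ ≤ R → ‖𝒩 F‖ ≤ R := by
    intro F hF
    have hFnn : 0 ≤ ‖F‖ := norm_nonneg F
    have hcF : c * ‖F‖ < 1 := lt_of_le_of_lt (mul_le_mul_of_nonneg_left hF hc) hcR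
    have hden : 0 < 1 - c * ‖F‖ := by linarith
    have h₁ := hmap F hcF
    have key : a * ‖F‖ / (1 - c * ‖F‖) ≤ a * R / (1 - c * R) := by
      rw [div_le_div_iff₀ hden hδ]
      nlinarith [mul_le_mul_of_nonneg_left hF ha]
    have h2' : a * R / (1 - c * R) ≤ (1 - 1 / b) * R := by
      have h2'' : a / (1 - c * R) ≤ 1 - 1 / b := by
        rw [hRdef, ← mul_assoc]; exact h2.le
      calc a * R / (1 - c * R) = (a / (1 - c * R)) * R := by ring
        _ ≤ (1 - 1/b) * R := mul_le_mul_of_nonneg_right h2'' hR0.le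
    have hbR : (1 - 1 / b) * R = R - ‖F₀‖ := by
      rw [hRdef]; field_simp
    linarith
  -- Part 2: Lipschitz property via subdivision
  set L : ℝ := a / (1 - c * R) ^ 2 with hLdef
  have hL0 : 0 ≤ L := by positivity
  have hL1 : L < 1 := by rw [hLdef, hRdef, ← mul_assoc]; exact h3
  have hlipB : ∀ F G : X, ‖F‖ ≤ R → ‖G‖ ≤ R → ‖𝒩 F - 𝒩 G‖ ≤ L * ‖F - G‖ := by
    intro F G hF hG
    set d : ℝ := ‖F - G‖ with hddef
    have hd0 : 0 ≤ d := norm_nonneg _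
    have main : ∀ n : ℕ, 1 ≤ n → c * (R + d / n) < 1 →
        ‖𝒩 F - 𝒩 G‖ ≤ a * d / (1 - c * (R + d / n)) ^ 2 := by
      intro n hn hcn
      have hn0 : (n:ℝ) ≠ 0 := Nat.cast_ne_zero.mpr (by omega)
      have hnpos : (0:ℝ) < n := by positivity
      set h : X := (n:ℝ)⁻¹ • (F - G) with hhdef
      have hnormh : ‖h‖ = d / n := by
        rw [hhdef, norm_smul, norm_inv, Real.norm_natCast]
        rw [div_eq_inv_mul, hddef]
      set P : ℕ → X := fun i => G + (i:ℝ) • h with hPdef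
      have hP0 : P 0 = G := by simp [hPdef]
      have hPn : P n = F := by
        rw [hPdef]
        simp only [hhdef, smul_smul, mul_inv_cancel₀ hn0, one_smul]
        abel
      have hPnorm : ∀ i : ℕ, i ≤ n → ‖P i‖ ≤ R := by
        intro i hi
        have ht0 : (0:ℝ) ≤ (i:ℝ) / n := by positivity
        have ht1 : (i:ℝ) / n ≤ 1 := by
          rw [div_le_one hnpos]; exact_mod_cast hi
        have hrw : P i = (1 - (i:ℝ)/n) • G + ((i:ℝ)/n) • F := by
          rw [hPdef]
          simp only [hhdef, smul_smul]
          rw [show (i:ℝ) * (n:ℝ)⁻¹ = (i:ℝ)/n by rw [div_eq_mul_inv]]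
          rw [smul_sub, sub_smul, one_smul]
          abel
        calc ‖P i‖ = ‖(1 - (i:ℝ)/n) • G + ((i:ℝ)/n) • F‖ := by rw [hrw]
          _ ≤ ‖(1 - (i:ℝ)/n) • G‖ + ‖((i:ℝ)/n) • F‖ := norm_add_le _ _
          _ = (1 - (i:ℝ)/n) * ‖G‖ + ((i:ℝ)/n) * ‖F‖ := by
              rw [norm_smul, norm_smul, Real.norm_eq_abs, Real.norm_eq_abs,
                abs_of_nonneg (by linarith), abs_of_nonneg ht0]
          _ ≤ (1 - (i:ℝ)/n) * R + ((i:ℝ)/n) * R := by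
              gcongr <;> linarith
          _ = R := by ring
      have hstep : ∀ i : ℕ, i < n →
          ‖𝒩 (P (i+1)) - 𝒩 (P i)‖ ≤ a * (d/n) / (1 - c * (R + d/n)) ^ 2 := by
        intro i hi
        have hPi : ‖P i‖ ≤ R := hPnorm i hi.le
        have hsum : ‖P i‖ + ‖h‖ ≤ R + d / n := by rw [hnormh]; linarith
        have hcsum : c * (‖P i‖ + ‖h‖) < 1 :=
          lt_of_le_of_lt (mul_le_mul_of_nonneg_left hsum hc) hcn
        have hPsucc : P (i+1) = P i + h := by
          rw [hPdef]
          push_cast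
          rw [add_smul, one_smul]
          abel
        rw [hPsucc]
        calc ‖𝒩 (P i + h) - 𝒩 (P i)‖ ≤ a * ‖h‖ / (1 - c * (‖P i‖ + ‖h‖)) ^ 2 :=
              hlip (P i) h hcsum
          _ ≤ a * (d/n) / (1 - c * (R + d/n)) ^ 2 := by
              rw [hnormh]
              have hy : 0 < 1 - c * (R + d / (n:ℝ)) := by linarith
              have hx : 1 - c * (R + d / (n:ℝ)) ≤ 1 - c * (‖P i‖ + ‖h‖) := by
                nlinarith [mul_le_mul_of_nonneg_left hsum hc]
              gcongr
      have htel : 𝒩 F - 𝒩 G = ∑ i ∈ Finset.range n, (𝒩 (P (i+1)) - 𝒩 (P i)) := by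
        rw [Finset.sum_range_sub (fun i => 𝒩 (P i)), hP0, hPn]
      calc ‖𝒩 F - 𝒩 G‖ = ‖∑ i ∈ Finset.range n, (𝒩 (P (i+1)) - 𝒩 (P i))‖ := by rw [htel]
        _ ≤ ∑ i ∈ Finset.range n, ‖𝒩 (P (i+1)) - 𝒩 (P i)‖ := norm_sum_le _ _
        _ ≤ ∑ _i ∈ Finset.range n, a * (d/n) / (1 - c * (R + d/n)) ^ 2 := by
            apply Finset.sum_le_sum
            intro i hi
            exact hstep i (Finset.mem_range.mp hi)
        _ = (n:ℝ) * (a * (d/n) / (1 - c * (R + d/n)) ^ 2) := by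
            rw [Finset.sum_const, Finset.card_range, nsmul_eq_mul]
        _ = a * d / (1 - c * (R + d/n)) ^ 2 := by
            rw [← mul_div_assoc]
            congr 1
            field_simp
    -- limiting argument
    have t1 : Filter.Tendsto (fun n : ℕ => d / n) Filter.atTop (nhds 0) :=
      tendsto_const_div_atTop_nhds_zero_nat d
    have t2 : Filter.Tendsto (fun n : ℕ => 1 - c * (R + d / n)) Filter.atTop
        (nhds (1 - c * R)) := by
      have := ((t1.const_add R).const_mul c).const_sub 1
      simpa using this
    have t2' : Filter.Tendsto (fun n : ℕ => c * (R + d / n)) Filter.atTop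
        (nhds (c * R)) := by
      have := (t1.const_add R).const_mul c
      simpa using this
    have t4 : Filter.Tendsto (fun n : ℕ => a * d / (1 - c * (R + d / n)) ^ 2)
        Filter.atTop (nhds (a * d / (1 - c * R) ^ 2)) := by
      exact Filter.Tendsto.div tendsto_const_nhds (t2.pow 2) (by positivity)
    have ev1 : ∀ᶠ n : ℕ in Filter.atTop, c * (R + d / n) < 1 :=
      t2'.eventually_lt_const hcR
    have ev : ∀ᶠ n : ℕ in Filter.atTop,
        ‖𝒩 F - 𝒩 G‖ ≤ a * d / (1 - c * (R + d / n)) ^ 2 := by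
      filter_upwards [ev1, Filter.eventually_ge_atTop 1] with n hn1 hn2
      exact main n hn2 hn1
    have hfin : ‖𝒩 F - 𝒩 G‖ ≤ a * d / (1 - c * R) ^ 2 := ge_of_tendsto t4 ev
    calc ‖𝒩 F - 𝒩 G‖ ≤ a * d / (1 - c * R) ^ 2 := hfin
      _ = L * d := by rw [hLdef]; ring
  -- Part 3: Banach fixed point
  refine ⟨hmapB, ⟨L, hL0, hL1, hlipB⟩, ?_⟩
  set s : Set X := Metric.closedBall (0:X) R with hsdef
  have hmem : ∀ x : X, x ∈ s ↔ ‖x‖ ≤ R := by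
    intro x; rw [hsdef, Metric.mem_closedBall, dist_zero_right]
  haveI : Nonempty s := ⟨⟨0, by rw [hmem]; simpa using hR0.le⟩⟩
  haveI : CompleteSpace s := completeSpace_coe_iff_isComplete.mpr Metric.isClosed_closedBall.isComplete
  set f : s → s := fun x => ⟨𝒩 x, (hmem _).mpr (hmapB x ((hmem _).mp x.2))⟩ with hfdef
  have hK : ContractingWith ⟨L, hL0⟩ f := by
    constructor
    · exact_mod_cast hL1
    · apply LipschitzWith.of_dist_le_mul
      intro x y
      rw [Subtype.dist_eq, Subtype.dist_eq, dist_eq_norm, dist_eq_norm]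
      exact hlipB x y ((hmem _).mp x.2) ((hmem _).mp y.2)
  refine ⟨(ContractingWith.fixedPoint f hK : s), ⟨(hmem _).mp (ContractingWith.fixedPoint f hK).2, ?_⟩, ?_⟩
  · have := ContractingWith.fixedPoint_isFixedPt hK
    exact congrArg Subtype.val this
  · rintro y ⟨hy1, hy2⟩
    have hyfix : Function.IsFixedPt f ⟨y, (hmem _).mpr hy1⟩ := Subtype.ext hy2
    have := ContractingWith.fixedPoint_unique hK hyfix
    exact congrArg Subtype.val this
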